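/- Let L be a finite-dimensional Lie algebra over ℝ, V a nonzero finite-dimensional Lie module over L that is irreducible (every Lie submodule of V is ⊥ or ⊤), and Z ∈ L. Assume: (i) the adjoint endomorphism ad Z of L is diagonalizable with integer eigenvalues, i.e., the supremum over i ∈ ℤ of the eigenspaces of ad Z with eigenvalue i is all of L; (ii) the action of Z on V is diagonalizable over ℝ, i.e., the supremum over θ ∈ ℝ of the eigenspaces of the endomorphism v ↦ ⁅Z, v⁆ is all of V. Let θmax be the largest real number whose eigenspace for the action of Z on V is nonzero. Then the set {v ∈ V | ⁅x, v⁆ = 0 for every integer i > 0 and every x in the i-eigenspace of ad Z} is exactly the θmax-eigenspace of the action of Z on V. -/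

import Mathlib

open Module Polynomial

section Aux

variable {L : Type*} [LieRing L] [LieAlgebra ℝ L]
  {V : Type*} [AddCommGroup V] [Module ℝ V] [LieRingModule L V] [LieModule ℝ L V]

/-- Weight-shift: a `c`-graded element maps the `θ`-eigenspace into the `θ+c`-eigenspace. -/
lemma aux_shift (Z : L) {x : L} {c : ℝ}
    (hx : x ∈ Module.End.eigenspace (LieAlgebra.ad ℝ L Z) c) {u : V} {θ : ℝ}
    (hu : u ∈ Module.End.eigenspace (LieModule.toEnd ℝ L V Z) θ) :
    ⁅x, u⁆ ∈ Module.End.eigenspace (LieModule.toEnd ℝ L V Z) (θ + c) := by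
  rw [Module.End.mem_eigenspace_iff] at hx hu ⊢
  rw [LieAlgebra.ad_apply] at hx
  rw [LieModule.toEnd_apply_apply] at hu ⊢
  rw [leibniz_lie, hx, hu, smul_lie, lie_smul, add_smul]
  abel

/-- Polynomial functional calculus on an eigenvector. -/
lemma aux_aeval {V : Type*} [AddCommGroup V] [Module ℝ V] (g : Module.End ℝ V) {μ : ℝ} {w : V}
    (h : g w = μ • w) (p : ℝ[X]) : (Polynomial.aeval g p) w = p.eval μ • w := by
  have hpow : ∀ n : ℕ, (g ^ n) w = μ ^ n • w := by
    intro n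
    induction n with
    | zero => simp
    | succ n ih =>
        rw [pow_succ', pow_succ']
        simp only [Module.End.mul_apply, ih, map_smul, h, smul_smul]
        rw [mul_comm]
  induction p using Polynomial.induction_on' with
  | add p q hp hq => simp [hp, hq, add_smul]
  | monomial n a =>
      simp [Polynomial.aeval_monomial, Polynomial.eval_monomial, hpow, smul_smul,
        Algebra.algebraMap_eq_smul_one]

end Aux

/-- **Proposition 2.3 (kernel identity).** Let `L` be a finite-dimensional real Lie algebra
with a `ℤ`-grading induced by a grading element `Z` (the eigenspaces of `ad Z` with integer
eigenvalues span `L`), and let `V` be a nonzero finite-dimensional irreducible Lie module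
over `L` on which `Z` acts diagonalizably with real eigenvalues. If `θmax` is the largest
eigenvalue of the action of `Z` on `V`, then the set of vectors annihilated by all
positively graded elements of `L` (i.e. `ker 𝔭₊`) is exactly the `θmax`-eigenspace
`V_{θmax}` of the action of `Z`. -/
theorem ker_positive_part_eq_top_eigenspace
    (L : Type*) [LieRing L] [LieAlgebra ℝ L] [FiniteDimensional ℝ L]
    (V : Type*) [AddCommGroup V] [Module ℝ V] [LieRingModule L V] [LieModule ℝ L V]
    [FiniteDimensional ℝ V] [Nontrivial V]
    (hirr : ∀ N : LieSubmodule ℝ L V, N = ⊥ ∨ N = ⊤)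
    (Z : L)
    (hgrad : ⨆ i : ℤ, Module.End.eigenspace (LieAlgebra.ad ℝ L Z) (i : ℝ) = ⊤)
    (hdiag : ⨆ θ : ℝ, Module.End.eigenspace (LieModule.toEnd ℝ L V Z) θ = ⊤)
    (θmax : ℝ)
    (hne : Module.End.eigenspace (LieModule.toEnd ℝ L V Z) θmax ≠ ⊥)
    (hmax : ∀ θ : ℝ, Module.End.eigenspace (LieModule.toEnd ℝ L V Z) θ ≠ ⊥ → θ ≤ θmax) :
    {v : V | ∀ (i : ℤ), 0 < i →
        ∀ x ∈ Module.End.eigenspace (LieAlgebra.ad ℝ L Z) (i : ℝ), ⁅x, v⁆ = 0} =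
      ↑(Module.End.eigenspace (LieModule.toEnd ℝ L V Z) θmax) := by
  classical
  set E : ℝ → Submodule ℝ V := fun θ => Module.End.eigenspace (LieModule.toEnd ℝ L V Z) θ with hE
  set G : ℝ → Submodule ℝ L := fun c => Module.End.eigenspace (LieAlgebra.ad ℝ L Z) c with hG
  -- Core: a nonzero highest-weight-type vector of weight `θ < θmax` cannot exist.
  have core : ∀ (θ : ℝ), θ < θmax → ∀ u : V, u ∈ E θ →
      (∀ i : ℤ, 0 < i → ∀ x ∈ G (i : ℝ), ⁅x, u⁆ = 0) → u = 0 := by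
    intro θ hθ u hu hk
    by_contra hu0
    -- generators: iterated brackets of `u` by nonpositively graded elements
    set gens : Set V := {w | ∃ l : List L,
        (∀ y ∈ l, ∃ i : ℤ, i ≤ 0 ∧ y ∈ G (i : ℝ)) ∧
        List.foldr (fun y acc => ⁅y, acc⁆) u l = w} with hgens
    set N : Submodule ℝ V := Submodule.span ℝ gens with hN
    have humem : u ∈ N := Submodule.subset_span ⟨[], by simp, rfl⟩
    -- each generator lies in an eigenspace of weight ≤ θ
    have hgw : ∀ l : List L, (∀ y ∈ l, ∃ i : ℤ, i ≤ 0 ∧ y ∈ G (i : ℝ)) →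
        ∃ θ' ≤ θ, List.foldr (fun y acc => ⁅y, acc⁆) u l ∈ E θ' := by
      intro l hl
      induction l with
      | nil => exact ⟨θ, le_rfl, hu⟩
      | cons y l ih =>
          obtain ⟨θ', hθ', hw⟩ := ih (fun y hy => hl y (List.mem_cons_of_mem _ hy))
          obtain ⟨i, hi, hyG⟩ := hl y List.mem_cons_self
          exact ⟨θ' + (i : ℝ), by
            have : (i : ℝ) ≤ 0 := by exact_mod_cast hi
            linarith, aux_shift Z hyG hw⟩
    -- stability of N under nonpositively graded elements
    have hstab0 : ∀ y : L, (∃ i : ℤ, i ≤ 0 ∧ y ∈ G (i : ℝ)) → ∀ w ∈ N, ⁅y, w⁆ ∈ N := by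
      intro y hy w hw
      induction hw using Submodule.span_induction with
      | mem w hwg =>
          obtain ⟨l, hl, rfl⟩ := hwg
          exact Submodule.subset_span ⟨y :: l, by
            intro z hz
            rcases List.mem_cons.mp hz with h | h
            · exact h ▸ hy
            · exact hl z h, rfl⟩
      | zero => simp
      | add a b _ _ ha hb => rw [lie_add]; exact N.add_mem ha hb
      | smul c a _ ha => rw [lie_smul]; exact N.smul_mem c ha
    -- key: N is stable under the action of every element of L
    have key : ∀ n : ℕ, ∀ l : List L, l.length ≤ n →
        (∀ y ∈ l, ∃ i : ℤ, i ≤ 0 ∧ y ∈ G (i : ℝ)) →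
        ∀ z : L, ⁅z, List.foldr (fun y acc => ⁅y, acc⁆) u l⁆ ∈ N := by
      intro n
      induction n with
      | zero =>
          intro l hlen hl z
          have : l = [] := List.eq_nil_of_length_eq_zero (Nat.le_zero.mp hlen)
          subst this
          simp only [List.foldr_nil]
          have hz : z ∈ ⨆ i : ℤ, G (i : ℝ) := hgrad ▸ Submodule.mem_top
          refine Submodule.iSup_induction (motive := fun z => ⁅z, u⁆ ∈ N) _ hz ?_ (by simp) ?_
          · intro i x hx
            rcases lt_or_ge 0 i with hi | hi
            · rw [hk i hi x hx]; exact N.zero_mem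
            · exact Submodule.subset_span ⟨[x], by
                intro y hy
                rw [List.mem_singleton] at hy
                exact ⟨i, hi, hy ▸ hx⟩, rfl⟩
          · intro a b ha hb; rw [add_lie]; exact N.add_mem ha hb
      | succ n ih =>
          intro l hlen hl z
          have hz : z ∈ ⨆ i : ℤ, G (i : ℝ) := hgrad ▸ Submodule.mem_top
          refine Submodule.iSup_induction
            (motive := fun z => ⁅z, List.foldr (fun y acc => ⁅y, acc⁆) u l⁆ ∈ N) _ hz ?_ (by simp) ?_
          · intro i x hx
            rcases lt_or_ge 0 i with hi | hi
            · -- positive degree: commute through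
              cases l with
              | nil =>
                  simp only [List.foldr_nil]
                  rw [hk i hi x hx]; exact N.zero_mem
              | cons y l' =>
                  simp only [List.foldr_cons]
                  rw [leibniz_lie]
                  have hl' : ∀ y ∈ l', ∃ i : ℤ, i ≤ 0 ∧ y ∈ G (i : ℝ) :=
                    fun y hy => hl y (List.mem_cons_of_mem _ hy)
                  have hlen' : l'.length ≤ n := by
                    simpa [Nat.succ_le_succ_iff] using hlen
                  refine N.add_mem (ih l' hlen' hl' _) ?_
                  exact hstab0 y (hl y List.mem_cons_self) _ (ih l' hlen' hl' x)
            · exact hstab0 x ⟨i, hi, hx⟩ _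
                (Submodule.subset_span ⟨l, hl, rfl⟩)
          · intro a b ha hb; rw [add_lie]; exact N.add_mem ha hb
    have hlie : ∀ (z : L) (w : V), w ∈ N → ⁅z, w⁆ ∈ N := by
      intro z w hw
      induction hw using Submodule.span_induction with
      | mem w hwg =>
          obtain ⟨l, hl, rfl⟩ := hwg
          exact key l.length l le_rfl hl z
      | zero => simp
      | add a b _ _ ha hb => rw [lie_add]; exact N.add_mem ha hb
      | smul c a _ ha => rw [lie_smul]; exact N.smul_mem c ha
    -- N as a Lie submodule is everything
    set NL : LieSubmodule ℝ L V :=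
      { N with lie_mem := fun {z w} hw => hlie z w hw } with hNL
    have hNtop : N = ⊤ := by
      rcases hirr NL with h | h
      · exfalso
        apply hu0
        have : u ∈ NL := humem
        rw [h] at this
        simpa using this
      · have := congrArg (fun (M : LieSubmodule ℝ L V) => (M : Submodule ℝ V)) h
        simpa only [LieSubmodule.top_toSubmodule] using this
    -- but N is contained in the span of eigenspaces of weight ≤ θ
    have hNle : N ≤ ⨆ (θ' : ℝ) (_ : θ' ≤ θ), E θ' := by
      rw [hN, Submodule.span_le]
      rintro w ⟨l, hl, rfl⟩
      obtain ⟨θ', hθ', hw⟩ := hgw l hl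
      exact Submodule.mem_iSup_of_mem θ' (Submodule.mem_iSup_of_mem hθ' hw)
    -- contradiction with independence of eigenspaces
    obtain ⟨vm, hvm, hvm0⟩ := Submodule.exists_mem_ne_zero_of_ne_bot hne
    have hdis : Disjoint (E θmax) (⨆ (θ' : ℝ) (_ : θ' ≤ θ), E θ') := by
      have hind := Module.End.eigenspaces_iSupIndep (LieModule.toEnd ℝ L V Z)
      exact hind.disjoint_biSup (y := {θ' | θ' ≤ θ}) (by
        simp only [Set.mem_setOf_eq, not_le]; exact hθ)
    have : vm ∈ E θmax ⊓ ⨆ (θ' : ℝ) (_ : θ' ≤ θ), E θ' :=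
      ⟨hvm, hNle (hNtop ▸ Submodule.mem_top)⟩
    rw [hdis.eq_bot] at this
    exact hvm0 this
  -- the kernel as a subspace
  set K : Submodule ℝ V :=
    { carrier := {v : V | ∀ (i : ℤ), 0 < i → ∀ x ∈ G (i : ℝ), ⁅x, v⁆ = 0}
      add_mem' := fun {a b} ha hb i hi x hx => by
        rw [lie_add, ha i hi x hx, hb i hi x hx, add_zero]
      zero_mem' := fun i hi x hx => lie_zero x
      smul_mem' := fun c v hv i hi x hx => by
        rw [lie_smul, hv i hi x hx, smul_zero] } with hK
  have hKZ : ∀ v ∈ K, (LieModule.toEnd ℝ L V Z) v ∈ K := by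
    intro v hv i hi x hx
    rw [LieModule.toEnd_apply_apply, leibniz_lie, hv i hi x hx, lie_zero, add_zero]
    have hZx : ⁅Z, x⁆ = ((i : ℝ)) • x := by
      have := (Module.End.mem_eigenspace_iff).mp hx
      rwa [LieAlgebra.ad_apply] at this
    rw [← lie_skew, hZx, neg_lie, smul_lie, hv i hi x hx, smul_zero, neg_zero]
  have hKpow : ∀ (n : ℕ) (v : V), v ∈ K → ((LieModule.toEnd ℝ L V Z) ^ n) v ∈ K := by
    intro n
    induction n with
    | zero => intro v hv; simpa using hv
    | succ n ih =>
        intro v hv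
        rw [pow_succ']
        exact hKZ _ (ih v hv)
  have hKaeval : ∀ (p : ℝ[X]) (v : V), v ∈ K →
      (Polynomial.aeval (LieModule.toEnd ℝ L V Z) p) v ∈ K := by
    intro p v hv
    rw [Polynomial.aeval_eq_sum_range]
    simp only [LinearMap.sum_apply, LinearMap.smul_apply]
    exact K.sum_mem fun i _ => K.smul_mem _ (hKpow i v hv)
  -- main bidirectional proof
  apply Set.eq_of_subset_of_subset
  · -- ker 𝔭₊ ⊆ V_{θmax}
    intro v hv
    have hvK : v ∈ K := hv
    have hvtop : v ∈ ⨆ θ : ℝ, E θ := hdiag ▸ Submodule.mem_top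
    rw [Submodule.mem_iSup_iff_exists_finsupp] at hvtop
    obtain ⟨f, hf, hsum⟩ := hvtop
    show v ∈ E θmax
    rw [← hsum, Finsupp.sum]
    refine (E θmax).sum_mem fun θ hθ => ?_
    -- f θ is the image of v under the Lagrange interpolation projector, so f θ ∈ K
    have hfθK : f θ ∈ K := by
      have hproj : (Polynomial.aeval (LieModule.toEnd ℝ L V Z)
          (Lagrange.basis f.support id θ)) v = f θ := by
        rw [← hsum, Finsupp.sum, map_sum]
        rw [Finset.sum_eq_single θ]
        · rw [aux_aeval _ ((Module.End.mem_eigenspace_iff).mp (hf θ))]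
          have h1 : (Lagrange.basis f.support id θ).eval θ = 1 :=
            Lagrange.eval_basis_self (v := id) (Set.injOn_id _) hθ
          rw [h1, one_smul]
        · intro θ' hθ' hne'
          have h0 : (Lagrange.basis f.support id θ).eval θ' = 0 :=
            Lagrange.eval_basis_of_ne (v := id) (Ne.symm hne') hθ'
          rw [aux_aeval _ ((Module.End.mem_eigenspace_iff).mp (hf θ')), h0, zero_smul]
        · intro h; exact absurd hθ h
      rw [← hproj]
      exact hKaeval _ v hvK
    -- and a nonzero element of K ∩ E θ forces θ = θmax
    have hfθ0 : f θ ≠ 0 := Finsupp.mem_support_iff.mp hθ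
    have hθle : θ ≤ θmax := by
      refine hmax θ fun hbot => hfθ0 ?_
      have h : f θ ∈ Module.End.eigenspace (LieModule.toEnd ℝ L V Z) θ := hf θ
      rw [hbot] at h
      simpa using h
    rcases eq_or_lt_of_le hθle with h | h
    · exact h ▸ hf θ
    · exact absurd (core θ h (f θ) (hf θ) hfθK) hfθ0
  · -- V_{θmax} ⊆ ker 𝔭₊
    intro v hv
    intro i hi x hx
    have hshift : ⁅x, v⁆ ∈ E (θmax + (i : ℝ)) := aux_shift Z hx hv
    by_contra hxv
    have hEne : E (θmax + (i : ℝ)) ≠ ⊥ := fun hbot => hxv (by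
      rw [hbot] at hshift; simpa using hshift)
    have := hmax _ hEne
    have : (0 : ℝ) < (i : ℝ) := by exact_mod_cast hi
    linarith
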